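/- Let V = X + α₁ max(β₁ − Y, 0) + α₂ max(Y − β₂, 0) with X, Y independent standard normal and β₁ ≤ β₂. Then for Z = aV, the moment generating function equals M(t) = E[e^{tZ}] = e^{(at)²/2}(N(β₂) − N(β₁)) + e^{(t/2)(ta²(1+α₂²) − 2aα₂β₂)} N(taα₂ − β₂) + e^{(t/2)(ta²(1+α₁²) + 2aα₁β₁)} N(taα₁ + β₁), where N is the standard normal cdf. -/
import Mathlib

open MeasureTheory ProbabilityTheory Real Set
open scoped NNReal ENNReal


open MeasureTheory ProbabilityTheory

/-- Standard normal cumulative distribution function. -/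
noncomputable def stdNormalCDF (d : ℝ) : ℝ :=
  ((gaussianReal 0 1) (Set.Iic d)).toReal

lemma tilt (c x : ℝ) :
    Real.exp (c * x) * gaussianPDFReal 0 1 x
      = Real.exp (c ^ 2 / 2) * gaussianPDFReal c 1 x := by
  simp only [gaussianPDFReal, NNReal.coe_one, mul_one, sub_zero]
  rw [mul_left_comm, mul_left_comm (Real.exp (c ^ 2 / 2)), ← Real.exp_add, ← Real.exp_add]
  congr 1
  ring

lemma int_gauss (g : ℝ → ℝ) (s : Set ℝ) (hs : MeasurableSet s) :
    ∫ x in s, g x ∂(gaussianReal 0 1) = ∫ x in s, gaussianPDFReal 0 1 x * g x := by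
  rw [gaussianReal_of_var_ne_zero _ one_ne_zero]
  have h1 : gaussianPDF 0 1 = fun x => ((Real.toNNReal (gaussianPDFReal 0 1 x) : ℝ≥0) : ℝ≥0∞) := by
    funext x; rfl
  rw [h1, restrict_withDensity hs, integral_withDensity_eq_integral_smul
    ((measurable_gaussianPDFReal 0 1).real_toNNReal)]
  congr 1
  funext x
  simp [NNReal.smul_def, Real.coe_toNNReal _ (gaussianPDFReal_nonneg 0 1 x)]

lemma int_pdf_set (m : ℝ) (s : Set ℝ) (hs : MeasurableSet s) :
    ∫ x in s, gaussianPDFReal m 1 x = (gaussianReal m 1 s).toReal := by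
  rw [gaussianReal_apply_eq_integral _ one_ne_zero,
    ENNReal.toReal_ofReal (setIntegral_nonneg hs fun x _ => gaussianPDFReal_nonneg m 1 x)]

lemma gauss_Iic (c d : ℝ) : (gaussianReal c 1 (Set.Iic d)).toReal = stdNormalCDF (d - c) := by
  have h : gaussianReal c 1 = (gaussianReal 0 1).map (· + c) := by
    rw [gaussianReal_map_add_const, zero_add]
  rw [h, Measure.map_apply (measurable_add_const c) measurableSet_Iic,
    Set.preimage_add_const_Iic, stdNormalCDF]

lemma gauss_singleton (c x : ℝ) : gaussianReal c 1 {x} = 0 := by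
  rw [gaussianReal_apply_eq_integral _ one_ne_zero]
  simp [Measure.restrict_singleton]

lemma gauss_Ioi (c b : ℝ) : (gaussianReal c 1 (Set.Ioi b)).toReal = stdNormalCDF (c - b) := by
  have hmap : (gaussianReal (-c) 1).map (fun x => (-1 : ℝ) * x) = gaussianReal c 1 := by
    rw [gaussianReal_map_const_mul]
    norm_num
  rw [← hmap, Measure.map_apply (measurable_const_mul _) measurableSet_Ioi]
  have hpre : (fun x => (-1 : ℝ) * x) ⁻¹' Set.Ioi b = Set.Iio (-b) := by
    ext x; simp [lt_neg, neg_lt]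
  rw [hpre, measure_congr (Iio_ae_eq_Iic' (gauss_singleton _ _)), gauss_Iic]
  ring_nf

lemma tilt' (c b x : ℝ) :
    gaussianPDFReal 0 1 x * Real.exp (c * (x - b))
      = Real.exp (c ^ 2 / 2 - c * b) * gaussianPDFReal c 1 x := by
  rw [show Real.exp (c * (x - b)) = Real.exp (c * x) * Real.exp (-(c * b)) by
      rw [← Real.exp_add]; ring_nf,
    show Real.exp (c ^ 2 / 2 - c * b) = Real.exp (c ^ 2 / 2) * Real.exp (-(c * b)) by
      rw [← Real.exp_add]; ring_nf,
    show gaussianPDFReal 0 1 x * (Real.exp (c * x) * Real.exp (-(c * b)))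
      = Real.exp (c * x) * gaussianPDFReal 0 1 x * Real.exp (-(c * b)) by ring,
    tilt]
  ring


/-- MGF of the extended skew normal variable `Z = aV`,
`V = X + α₁ max(β₁ − Y, 0) + α₂ max(Y − β₂, 0)` with `X, Y` independent standard normal
and `β₁ ≤ β₂`:
`M(t) = e^{(at)²/2}(N(β₂)−N(β₁)) + e^{(t/2)(ta²(1+α₂²)−2aα₂β₂)} N(taα₂−β₂)
      + e^{(t/2)(ta²(1+α₁²)+2aα₁β₁)} N(taα₁+β₁)`. -/
theorem stmt_14 (a α₁ α₂ β₁ β₂ t : ℝ) (ha : 0 < a) (hβ : β₁ ≤ β₂) :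
    (∫ p : ℝ × ℝ,
        Real.exp (t * (a * (p.1 + α₁ * max (β₁ - p.2) 0 + α₂ * max (p.2 - β₂) 0)))
        ∂((gaussianReal 0 1).prod (gaussianReal 0 1)))
    = Real.exp ((a * t) ^ 2 / 2) * (stdNormalCDF β₂ - stdNormalCDF β₁)
      + Real.exp ((t / 2) * (t * a ^ 2 * (1 + α₂ ^ 2) - 2 * a * α₂ * β₂)) *
          stdNormalCDF (t * a * α₂ - β₂)
      + Real.exp ((t / 2) * (t * a ^ 2 * (1 + α₁ ^ 2) + 2 * a * α₁ * β₁)) *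
          stdNormalCDF (t * a * α₁ + β₁) := by
  have key : ∀ x A B : ℝ, Real.exp (t * (a * (x + A + B)))
      = Real.exp (t * a * x) * Real.exp (t * a * (A + B)) := by
    intro x A B; rw [← Real.exp_add]; ring_nf
  have h0 : (∫ p : ℝ × ℝ,
        Real.exp (t * (a * (p.1 + α₁ * max (β₁ - p.2) 0 + α₂ * max (p.2 - β₂) 0)))
        ∂((gaussianReal 0 1).prod (gaussianReal 0 1)))
      = (∫ x, Real.exp (t * a * x) ∂(gaussianReal 0 1)) *
          ∫ y, Real.exp (t * a * (α₁ * max (β₁ - y) 0 + α₂ * max (y - β₂) 0))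
            ∂(gaussianReal 0 1) := by
    rw [← integral_prod_mul]
    simp only [key]
  have hX : (∫ x, Real.exp (t * a * x) ∂(gaussianReal 0 1)) = Real.exp ((t * a) ^ 2 / 2) := by
    rw [← setIntegral_univ, int_gauss _ _ MeasurableSet.univ, setIntegral_univ]
    have hpt : ∀ x : ℝ, gaussianPDFReal 0 1 x * Real.exp (t * a * x)
        = Real.exp ((t * a) ^ 2 / 2) * gaussianPDFReal (t * a) 1 x := by
      intro x
      have h := tilt' (t * a) 0 x
      simpa using h
    simp only [hpt]
    rw [integral_const_mul, integral_gaussianPDFReal_eq_one _ one_ne_zero, mul_one]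
  set h : ℝ → ℝ := fun y =>
    gaussianPDFReal 0 1 y * Real.exp (t * a * (α₁ * max (β₁ - y) 0 + α₂ * max (y - β₂) 0))
    with hh
  have eq1 : Set.EqOn h
      (fun y => Real.exp ((-(t * a * α₁)) ^ 2 / 2 - (-(t * a * α₁)) * β₁) *
        gaussianPDFReal (-(t * a * α₁)) 1 y) (Set.Iic β₁) := by
    intro y hy
    simp only [Set.mem_Iic] at hy
    simp only [hh]
    rw [max_eq_left (by linarith), max_eq_right (by linarith), ← tilt']
    congr 1
    ring
  have eq2 : Set.EqOn h (fun y => gaussianPDFReal 0 1 y) (Set.Ioc β₁ β₂) := by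
    intro y hy
    simp only [Set.mem_Ioc] at hy
    simp only [hh]
    rw [max_eq_right (by linarith [hy.1]), max_eq_right (by linarith [hy.2])]
    simp
  have eq3 : Set.EqOn h
      (fun y => Real.exp ((t * a * α₂) ^ 2 / 2 - (t * a * α₂) * β₂) *
        gaussianPDFReal (t * a * α₂) 1 y) (Set.Ioi β₂) := by
    intro y hy
    simp only [Set.mem_Ioi] at hy
    simp only [hh]
    rw [max_eq_right (by linarith), max_eq_left (by linarith), ← tilt']
    congr 1
    ring
  have hint1 : IntegrableOn h (Set.Iic β₁) := by
    exact (((integrable_gaussianPDFReal (-(t * a * α₁)) 1).const_mul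
      _).integrableOn).congr_fun eq1.symm measurableSet_Iic
  have hint2 : IntegrableOn h (Set.Ioc β₁ β₂) :=
    ((integrable_gaussianPDFReal 0 1).integrableOn).congr_fun eq2.symm measurableSet_Ioc
  have hint3 : IntegrableOn h (Set.Ioi β₂) := by
    exact (((integrable_gaussianPDFReal (t * a * α₂) 1).const_mul
      _).integrableOn).congr_fun eq3.symm measurableSet_Ioi
  have hint12 : IntegrableOn h (Set.Iic β₂) := by
    have := hint1.union hint2
    rwa [Set.Iic_union_Ioc_eq_Iic hβ] at this
  have hY : (∫ y, Real.exp (t * a * (α₁ * max (β₁ - y) 0 + α₂ * max (y - β₂) 0))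
        ∂(gaussianReal 0 1))
      = (Real.exp ((-(t * a * α₁)) ^ 2 / 2 - (-(t * a * α₁)) * β₁) *
          stdNormalCDF (β₁ - -(t * a * α₁))
        + (stdNormalCDF β₂ - stdNormalCDF β₁))
        + Real.exp ((t * a * α₂) ^ 2 / 2 - (t * a * α₂) * β₂) *
          stdNormalCDF (t * a * α₂ - β₂) := by
    rw [← setIntegral_univ, int_gauss _ _ MeasurableSet.univ, setIntegral_univ, ← hh]
    rw [← intervalIntegral.integral_Iic_add_Ioi hint12 hint3]
    rw [← Set.Iic_union_Ioc_eq_Iic hβ,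
      setIntegral_union (Set.Iic_disjoint_Ioc le_rfl) measurableSet_Ioc hint1 hint2]
    rw [setIntegral_congr_fun measurableSet_Iic eq1,
      setIntegral_congr_fun measurableSet_Ioc eq2,
      setIntegral_congr_fun measurableSet_Ioi eq3]
    have hIoc : (gaussianReal 0 1 (Set.Ioc β₁ β₂)).toReal
        = stdNormalCDF β₂ - stdNormalCDF β₁ := by
      have hsub : (gaussianReal 0 1 (Set.Iic β₁)) + gaussianReal 0 1 (Set.Ioc β₁ β₂)
          = gaussianReal 0 1 (Set.Iic β₂) := by
        rw [← measure_union (Set.Iic_disjoint_Ioc le_rfl) measurableSet_Ioc,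
          Set.Iic_union_Ioc_eq_Iic hβ]
      have h1 : gaussianReal 0 1 (Set.Iic β₁) ≠ ⊤ := measure_ne_top _ _
      have h2 : gaussianReal 0 1 (Set.Ioc β₁ β₂) ≠ ⊤ := measure_ne_top _ _
      have h3 := congrArg ENNReal.toReal hsub
      rw [ENNReal.toReal_add h1 h2] at h3
      unfold stdNormalCDF
      linarith [h3]
    rw [integral_const_mul, integral_const_mul, int_pdf_set _ _ measurableSet_Iic,
      int_pdf_set _ _ measurableSet_Ioc, int_pdf_set _ _ measurableSet_Ioi,
      gauss_Iic, gauss_Ioi, hIoc]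
  rw [h0, hX, hY]
  rw [show β₁ - -(t * a * α₁) = t * a * α₁ + β₁ by ring]
  simp only [mul_add, ← mul_assoc, ← Real.exp_add]
  rw [show (t * a) ^ 2 / 2 + ((-(t * a * α₁)) ^ 2 / 2 - -(t * a * α₁) * β₁)
      = (t / 2) * (t * a ^ 2 * (1 + α₁ ^ 2) + 2 * a * α₁ * β₁) by ring,
    show (t * a) ^ 2 / 2 + ((t * a * α₂) ^ 2 / 2 - t * a * α₂ * β₂)
      = (t / 2) * (t * a ^ 2 * (1 + α₂ ^ 2) - 2 * a * α₂ * β₂) by ring,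
    show (t * a) ^ 2 / 2 = (a * t) ^ 2 / 2 by ring]
  ring
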